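/- Let h be a nonzero complex number and R = ℂ[a,b]/(a² − ab + b², a²b − ab²). For integers d₁, d₂ ≥ 0 set a_{d₁,d₂} = (∏_{m=1}^{d₁+d₂} (a + b + m·h)) · (∏_{m=1}^{d₁} (a + m·h))^{-3} · (∏_{m=1}^{d₂} (b + m·h))^{-3} ∈ R, and set a_{d₁,d₂} = 0 if d₁ < 0 or d₂ < 0. Let J = ∑_{d₁,d₂≥0} a_{d₁,d₂} q₁^{d₁} q₂^{d₂} ∈ R[[q₁,q₂]], and let E_a, E_b : R[[q₁,q₂]] → R[[q₁,q₂]] be the ℂ-linear operators multiplying the coefficient of q₁^{d₁} q₂^{d₂} by (a + d₁·h) and by (b + d₂·h) respectively. Then (E_a E_b² − E_a² E_b) J = q₂·(E_a J) − q₁·(E_b J); equivalently, for all d₁, d₂ ≥ 0 not both zero, a_{d₁,d₂}·((a+d₁h)(b+d₂h)² − (a+d₁h)²(b+d₂h)) = a_{d₁,d₂−1}·(a+d₁h) − a_{d₁−1,d₂}·(b+d₂h). This is the second quantum differential equation D₂J = 0 of the flag manifold F₃, where D₂ = h³∂₁∂₂² − h³∂₁²∂₂ − q₂h∂₁ + q₁h∂₂.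 -/

import Mathlib

/-- The cohomology ring `H^*(F₃;ℂ) = ℂ[a,b]/(a² − ab + b², a²b − ab²)` of the full flag
manifold `F₃ = F_{1,2}(ℂ³)`. -/
noncomputable abbrev FlagCohomology : Type :=
  MvPolynomial (Fin 2) ℂ ⧸ Ideal.span
    {(MvPolynomial.X 0 : MvPolynomial (Fin 2) ℂ) ^ 2
        - MvPolynomial.X 0 * MvPolynomial.X 1 + MvPolynomial.X 1 ^ 2,
      (MvPolynomial.X 0 : MvPolynomial (Fin 2) ℂ) ^ 2 * MvPolynomial.X 1
        - MvPolynomial.X 0 * MvPolynomial.X 1 ^ 2}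

/-- The degree-two generator `a`. -/
noncomputable abbrev flagA : FlagCohomology :=
  Ideal.Quotient.mk _ (MvPolynomial.X 0)

/-- The degree-two generator `b`. -/
noncomputable abbrev flagB : FlagCohomology :=
  Ideal.Quotient.mk _ (MvPolynomial.X 1)

lemma flagA_cube : flagA ^ 3 = 0 := by
  rw [show flagA ^ 3 = Ideal.Quotient.mk _ ((MvPolynomial.X 0 : MvPolynomial (Fin 2) ℂ) ^ 3) by
    rw [map_pow], Ideal.Quotient.eq_zero_iff_mem]
  exact Ideal.mem_span_pair.mpr ⟨MvPolynomial.X 0, 1, by ring⟩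

lemma flagB_cube : flagB ^ 3 = 0 := by
  rw [show flagB ^ 3 = Ideal.Quotient.mk _ ((MvPolynomial.X 1 : MvPolynomial (Fin 2) ℂ) ^ 3) by
    rw [map_pow], Ideal.Quotient.eq_zero_iff_mem]
  exact Ideal.mem_span_pair.mpr ⟨MvPolynomial.X 1, -1, by ring⟩

lemma flag_rel : flagA ^ 2 * flagB - flagA * flagB ^ 2 = 0 := by
  rw [show flagA ^ 2 * flagB - flagA * flagB ^ 2 = Ideal.Quotient.mk _
      ((MvPolynomial.X 0 : MvPolynomial (Fin 2) ℂ) ^ 2 * MvPolynomial.X 1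
        - MvPolynomial.X 0 * MvPolynomial.X 1 ^ 2) by
    simp [map_sub, map_mul, map_pow], Ideal.Quotient.eq_zero_iff_mem]
  exact Ideal.subset_span (Set.mem_insert_iff.mpr (Or.inr rfl))

lemma main_case {R : Type*} [CommRing R] (P Qa Qb α β σ : R)
    (hα : Ring.inverse α * α = 1) (hβ : Ring.inverse β * β = 1) (hσ : σ = α + β) :
    P * σ * Ring.inverse (Qa * α) ^ 3 * Ring.inverse (Qb * β) ^ 3 * (α * β ^ 2 - α ^ 2 * β)
      = P * Ring.inverse (Qa * α) ^ 3 * Ring.inverse Qb ^ 3 * α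
        - P * Ring.inverse Qa ^ 3 * Ring.inverse (Qb * β) ^ 3 * β := by
  rw [Ring.mul_inverse_rev Qa α, Ring.mul_inverse_rev Qb β]
  have h3α : Ring.inverse α ^ 3 * α ^ 3 = 1 := by rw [← mul_pow, hα, one_pow]
  have h3β : Ring.inverse β ^ 3 * β ^ 3 = 1 := by rw [← mul_pow, hβ, one_pow]
  subst hσ
  linear_combination (P * Ring.inverse Qa ^ 3 * Ring.inverse Qb ^ 3 * Ring.inverse α ^ 3 * α) * h3β
    - (P * Ring.inverse Qa ^ 3 * Ring.inverse Qb ^ 3 * Ring.inverse β ^ 3 * β) * h3α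

lemma edge_case {R : Type*} [CommRing R] (P Qb a β σ : R) (ha : a ^ 3 = 0)
    (hβ : Ring.inverse β * β = 1) (hσ : σ = a + β) :
    P * σ * Ring.inverse (Qb * β) ^ 3 * (a * β ^ 2 - a ^ 2 * β) = P * Ring.inverse Qb ^ 3 * a := by
  rw [Ring.mul_inverse_rev Qb β]
  have h3β : Ring.inverse β ^ 3 * β ^ 3 = 1 := by rw [← mul_pow, hβ, one_pow]
  subst hσ
  linear_combination (P * Ring.inverse Qb ^ 3 * a) * h3β
    - (P * Ring.inverse Qb ^ 3 * Ring.inverse β ^ 3 * β) * ha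

set_option maxHeartbeats 2000000 in
theorem stmt_5 (h : ℂ) (hh : h ≠ 0)
    -- the coefficients `a_{d₁,d₂}`, extended by zero to negative indices
    (A : ℤ → ℤ → FlagCohomology)
    (hA : ∀ d₁ d₂ : ℕ, A d₁ d₂ =
      (∏ k ∈ Finset.range (d₁ + d₂),
          (flagA + flagB + algebraMap ℂ FlagCohomology (((k : ℂ) + 1) * h))) *
        Ring.inverse (∏ k ∈ Finset.range d₁,
          (flagA + algebraMap ℂ FlagCohomology (((k : ℂ) + 1) * h))) ^ 3 *
        Ring.inverse (∏ k ∈ Finset.range d₂,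
          (flagB + algebraMap ℂ FlagCohomology (((k : ℂ) + 1) * h))) ^ 3)
    (hA0 : ∀ d₁ d₂ : ℤ, d₁ < 0 ∨ d₂ < 0 → A d₁ d₂ = 0)
    -- `J = ∑ a_{d₁,d₂} q₁^{d₁} q₂^{d₂}`
    (J : MvPowerSeries (Fin 2) FlagCohomology)
    (hJ : ∀ s : Fin 2 →₀ ℕ, MvPowerSeries.coeff s J = A (s 0) (s 1))
    -- the operators `E_a`, `E_b` multiplying the coefficient of `q₁^{d₁} q₂^{d₂}`
    -- by `a + d₁·h` and `b + d₂·h` respectively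
    (Ea Eb : MvPowerSeries (Fin 2) FlagCohomology → MvPowerSeries (Fin 2) FlagCohomology)
    (hEa : ∀ F s, MvPowerSeries.coeff s (Ea F) =
      (flagA + algebraMap ℂ FlagCohomology ((s 0 : ℂ) * h)) * MvPowerSeries.coeff s F)
    (hEb : ∀ F s, MvPowerSeries.coeff s (Eb F) =
      (flagB + algebraMap ℂ FlagCohomology ((s 1 : ℂ) * h)) * MvPowerSeries.coeff s F) :
    -- `(E_a E_b² − E_a² E_b) J = q₂ (E_a J) − q₁ (E_b J)`
    Ea (Eb (Eb J)) - Ea (Ea (Eb J))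
        = MvPowerSeries.X 1 * Ea J - MvPowerSeries.X 0 * Eb J ∧
    -- equivalently, the coefficient recursion
    ∀ d₁ d₂ : ℤ, 0 ≤ d₁ → 0 ≤ d₂ → ¬(d₁ = 0 ∧ d₂ = 0) →
      A d₁ d₂ *
        ((flagA + algebraMap ℂ FlagCohomology ((d₁ : ℂ) * h))
            * (flagB + algebraMap ℂ FlagCohomology ((d₂ : ℂ) * h)) ^ 2
          - (flagA + algebraMap ℂ FlagCohomology ((d₁ : ℂ) * h)) ^ 2
              * (flagB + algebraMap ℂ FlagCohomology ((d₂ : ℂ) * h)))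
        = A d₁ (d₂ - 1) * (flagA + algebraMap ℂ FlagCohomology ((d₁ : ℂ) * h))
          - A (d₁ - 1) d₂ * (flagB + algebraMap ℂ FlagCohomology ((d₂ : ℂ) * h)) := by
  have ha3 : flagA ^ 3 = 0 := flagA_cube
  have hb3 : flagB ^ 3 = 0 := flagB_cube
  have hua : ∀ m : ℕ, Ring.inverse (flagA + algebraMap ℂ FlagCohomology (((m:ℂ)+1)*h))
      * (flagA + algebraMap ℂ FlagCohomology (((m:ℂ)+1)*h)) = 1 := fun m =>
    Ring.inverse_mul_cancel _ (IsNilpotent.isUnit_add_right_of_commute ⟨3, ha3⟩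
      ((isUnit_iff_ne_zero.mpr (mul_ne_zero (Nat.cast_add_one_ne_zero m) hh)).map
        (algebraMap ℂ FlagCohomology)) (Commute.all _ _))
  have hub : ∀ m : ℕ, Ring.inverse (flagB + algebraMap ℂ FlagCohomology (((m:ℂ)+1)*h))
      * (flagB + algebraMap ℂ FlagCohomology (((m:ℂ)+1)*h)) = 1 := fun m =>
    Ring.inverse_mul_cancel _ (IsNilpotent.isUnit_add_right_of_commute ⟨3, hb3⟩
      ((isUnit_iff_ne_zero.mpr (mul_ne_zero (Nat.cast_add_one_ne_zero m) hh)).map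
        (algebraMap ℂ FlagCohomology)) (Commute.all _ _))
  have key : ∀ n₁ n₂ : ℕ, ¬(n₁ = 0 ∧ n₂ = 0) →
      A n₁ n₂ *
        ((flagA + algebraMap ℂ FlagCohomology ((n₁ : ℂ) * h))
            * (flagB + algebraMap ℂ FlagCohomology ((n₂ : ℂ) * h)) ^ 2
          - (flagA + algebraMap ℂ FlagCohomology ((n₁ : ℂ) * h)) ^ 2
              * (flagB + algebraMap ℂ FlagCohomology ((n₂ : ℂ) * h)))
        = A n₁ ((n₂ : ℤ) - 1) * (flagA + algebraMap ℂ FlagCohomology ((n₁ : ℂ) * h))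
          - A ((n₁ : ℤ) - 1) n₂ * (flagB + algebraMap ℂ FlagCohomology ((n₂ : ℂ) * h)) := by
    intro n₁ n₂ hne
    match n₁, n₂ with
    | 0, 0 => exact absurd ⟨rfl, rfl⟩ hne
    | 0, p+1 =>
      rw [show (((p:ℕ)+1:ℕ):ℤ) - 1 = ((p:ℕ):ℤ) by push_cast; ring,
        hA0 (((0:ℕ):ℤ) - 1) (((p+1:ℕ)):ℤ) (Or.inl (by norm_num)),
        hA 0 (p+1), hA 0 p]
      simp only [Nat.cast_zero, zero_mul, map_zero, add_zero, Nat.zero_add, zero_add,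
        Finset.range_zero, Finset.prod_empty, Ring.inverse_one, one_pow, mul_one, one_mul]
      simp only [Finset.prod_range_succ]
      rw [show (((p+1:ℕ)):ℂ) = (p:ℂ)+1 by push_cast; ring]
      linear_combination edge_case
        (∏ k ∈ Finset.range p, (flagA + flagB + algebraMap ℂ FlagCohomology (((k:ℂ)+1)*h)))
        (∏ k ∈ Finset.range p, (flagB + algebraMap ℂ FlagCohomology (((k:ℂ)+1)*h)))
        flagA (flagB + algebraMap ℂ FlagCohomology (((p:ℂ)+1)*h))
        (flagA + flagB + algebraMap ℂ FlagCohomology (((p:ℂ)+1)*h)) ha3 (hub p) (by ring)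
    | m+1, 0 =>
      rw [show (((m+1:ℕ)):ℤ) - 1 = ((m:ℕ):ℤ) by push_cast; ring,
        hA0 (((m+1:ℕ)):ℤ) (((0:ℕ):ℤ) - 1) (Or.inr (by norm_num)),
        hA (m+1) 0, hA m 0]
      simp only [Nat.cast_zero, zero_mul, map_zero, add_zero, Nat.add_zero,
        Finset.range_zero, Finset.prod_empty, Ring.inverse_one, one_pow, mul_one, one_mul]
      simp only [Finset.prod_range_succ]
      rw [show (((m+1:ℕ)):ℂ) = (m:ℂ)+1 by push_cast; ring]
      linear_combination -edge_case
        (∏ k ∈ Finset.range m, (flagA + flagB + algebraMap ℂ FlagCohomology (((k:ℂ)+1)*h)))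
        (∏ k ∈ Finset.range m, (flagA + algebraMap ℂ FlagCohomology (((k:ℂ)+1)*h)))
        flagB (flagA + algebraMap ℂ FlagCohomology (((m:ℂ)+1)*h))
        (flagA + flagB + algebraMap ℂ FlagCohomology (((m:ℂ)+1)*h)) hb3 (hua m) (by ring)
    | m+1, p+1 =>
      rw [show (((p+1:ℕ)):ℤ) - 1 = ((p:ℕ):ℤ) by push_cast; ring,
        show (((m+1:ℕ)):ℤ) - 1 = ((m:ℕ):ℤ) by push_cast; ring,
        hA (m+1) (p+1), hA (m+1) p, hA m (p+1)]
      rw [show m + 1 + (p+1) = (m+1+p) + 1 by ring, show m + (p+1) = m+1+p by ring]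
      simp only [Finset.prod_range_succ]
      rw [show (((m+1:ℕ)):ℂ) = (m:ℂ)+1 by push_cast; ring,
        show (((p+1:ℕ)):ℂ) = (p:ℂ)+1 by push_cast; ring]
      linear_combination main_case
        (∏ k ∈ Finset.range (m+1+p), (flagA + flagB + algebraMap ℂ FlagCohomology (((k:ℂ)+1)*h)))
        (∏ k ∈ Finset.range m, (flagA + algebraMap ℂ FlagCohomology (((k:ℂ)+1)*h)))
        (∏ k ∈ Finset.range p, (flagB + algebraMap ℂ FlagCohomology (((k:ℂ)+1)*h)))
        (flagA + algebraMap ℂ FlagCohomology (((m:ℂ)+1)*h))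
        (flagB + algebraMap ℂ FlagCohomology (((p:ℂ)+1)*h))
        (flagA + flagB + algebraMap ℂ FlagCohomology (((((m+1+p:ℕ)):ℂ)+1)*h))
        (hua m) (hub p)
        (by rw [show ((((m+1+p:ℕ)):ℂ)+1)*h = ((m:ℂ)+1)*h + ((p:ℂ)+1)*h by push_cast; ring,
          map_add]; ring)
  have hif2 : ∀ n₁ n₂ : ℕ,
      (if 1 ≤ n₂ then (flagA + algebraMap ℂ FlagCohomology ((n₁:ℂ) * h)) * A ↑n₁ ↑(n₂ - 1)
        else 0)
      = A ↑n₁ ((n₂:ℤ) - 1) * (flagA + algebraMap ℂ FlagCohomology ((n₁:ℂ) * h)) := by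
    intro n₁ n₂
    cases n₂ with
    | zero => rw [if_neg (by omega), show ((0:ℕ):ℤ) - 1 = -1 by norm_num,
        hA0 _ _ (Or.inr (by norm_num)), zero_mul]
    | succ e => rw [if_pos (by omega), Nat.add_sub_cancel,
        show (((e+1:ℕ)):ℤ) - 1 = ((e:ℕ):ℤ) by push_cast; ring, mul_comm]
  have hif1 : ∀ n₁ n₂ : ℕ,
      (if 1 ≤ n₁ then (flagB + algebraMap ℂ FlagCohomology ((n₂:ℂ) * h)) * A ↑(n₁ - 1) ↑n₂
        else 0)
      = A ((n₁:ℤ) - 1) ↑n₂ * (flagB + algebraMap ℂ FlagCohomology ((n₂:ℂ) * h)) := by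
    intro n₁ n₂
    cases n₁ with
    | zero => rw [if_neg (by omega), show ((0:ℕ):ℤ) - 1 = -1 by norm_num,
        hA0 _ _ (Or.inl (by norm_num)), zero_mul]
    | succ e => rw [if_pos (by omega), Nat.add_sub_cancel,
        show (((e+1:ℕ)):ℤ) - 1 = ((e:ℕ):ℤ) by push_cast; ring, mul_comm]
  constructor
  · ext s
    simp only [map_sub, MvPowerSeries.X_def, MvPowerSeries.coeff_monomial_mul, one_mul]
    simp only [hEa, hEb, hJ]
    simp only [Finsupp.tsub_apply, Finsupp.single_le_iff, Finsupp.single_apply,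
      reduceIte, Nat.sub_zero, eq_false (show ¬((1:Fin 2) = 0) by decide),
      eq_false (show ¬((0:Fin 2) = 1) by decide), if_false]
    by_cases h0 : s 0 = 0 ∧ s 1 = 0
    · rw [h0.1, h0.2, hA 0 0]
      simp only [Nat.add_zero, Finset.range_zero, Finset.prod_empty, Ring.inverse_one,
        one_pow, mul_one, one_mul, Nat.cast_zero, zero_mul, map_zero, add_zero]
      rw [if_neg (by omega), if_neg (by omega)]
      linear_combination -flag_rel
    · rw [hif2 (s 0) (s 1), hif1 (s 0) (s 1)]
      linear_combination key (s 0) (s 1) h0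
  · intro d₁ d₂ h1 h2 h3
    lift d₁ to ℕ using h1
    lift d₂ to ℕ using h2
    rw [Int.cast_natCast, Int.cast_natCast]
    exact key d₁ d₂ (by exact_mod_cast h3)
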